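/- For all η ∈ [0,1], max(1, 1/2 + η + η²/2) ≥ (1+η)/√2. -/
import Mathlib

theorem epr_key_inequality (η : ℝ) (hη : η ∈ Set.Icc (0:ℝ) 1) :
    max 1 (1 / 2 + η + η ^ 2 / 2) ≥ (1 + η) / Real.sqrt 2 := by
  obtain ⟨h0, h1⟩ := hη
  have hs : Real.sqrt 2 > 0 := by positivity
  have hs2 : Real.sqrt 2 ^ 2 = 2 := Real.sq_sqrt (by norm_num)
  rcases le_or_gt (1 + η) (Real.sqrt 2) with h | h
  · refine le_trans ?_ (le_max_left _ _)
    rw [div_le_one hs]; exact h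
  · refine le_trans ?_ (le_max_right _ _)
    have key : 1 / 2 + η + η ^ 2 / 2 = (1 + η) ^ 2 / 2 := by ring
    rw [key, div_le_div_iff₀ hs (by norm_num)]
    have h1η : (0:ℝ) < 1 + η := by linarith
    nlinarith [sq_nonneg (1 + η - Real.sqrt 2)]
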